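/- Fix integers r, s, t ≥ 2 with r² + s² + t² − r·s·t ≤ 4, and let B be the skew-symmetric 3×3 integer matrix with b_12 = r, b_23 = t, b_31 = s (the cyclic quiver with r arrows 1→2, t arrows 2→3 and s arrows 3→1). For n ≥ 1 let B(n) be the matrix obtained from B by applying n matrix mutations alternately at vertices 1 and 2, starting with vertex 1. Then: if n is even, the quiver of B(n) has r arrows 1→2, c_{n+1}·s − c_n·t arrows 2→3, and c_{n+2}·s − c_{n+1}·t arrows 3→1; if n is odd, the quiver of B(n) has r arrows 2→1, c_{n+1}·s − c_n·t arrows 1→3, and c_{n+2}·s − c_{n+1}·t arrows 3→2. In particular, c_{n+1}·s − c_n·t ≥ 2 for all n ≥ 1. -/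

import Mathlib

/-- Matrix mutation of a skew-symmetric integer matrix at index `k`. -/
def matMut (B : Matrix (Fin 3) (Fin 3) ℤ) (k : Fin 3) : Matrix (Fin 3) (Fin 3) ℤ :=
  Matrix.of fun i j =>
    if i = k ∨ j = k then -B i j
    else B i j + (B i k).sign * max (B i k * B k j) 0

/-- The matrix obtained from `B` by `n` mutations alternately at vertices `1` and `2`
(indices `0` and `1`), starting with vertex `1`. -/
def altMut (B : Matrix (Fin 3) (Fin 3) ℤ) : ℕ → Matrix (Fin 3) (Fin 3) ℤ
  | 0 => B
  | m + 1 => matMut (altMut B m) (if m % 2 = 0 then 0 else 1)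

set_option linter.unreachableTactic false
set_option linter.unusedTactic false

lemma mutE (r a b : ℤ) (hr : 0 < r) (hb : 0 < b) :
    matMut !![0, r, -b; -r, 0, a; b, -a, 0] 0
      = !![0, -r, b; r, 0, -(r*b-a); -b, r*b-a, 0] := by
  have h1 : (-r).sign = -1 := Int.sign_eq_neg_one_iff_neg.mpr (by linarith)
  have h2 : b.sign = 1 := Int.sign_eq_one_iff_pos.mpr hb
  have h5 : (0:ℤ) ≤ r * b := by positivity
  ext i j
  fin_cases i <;> fin_cases j <;>
    simp [matMut, h1, h2] <;>
    first
      | positivity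
      | (rw [max_eq_left h5] <;> ring)
      | (rw [max_eq_left (by positivity : (0:ℤ) ≤ b * r)]; ring)
      | ring

lemma mutO (r a b : ℤ) (hr : 0 < r) (hb : 0 < b) :
    matMut !![0, -r, a; r, 0, -b; -a, b, 0] 1
      = !![0, r, -(r*b-a); -r, 0, b; r*b-a, -b, 0] := by
  have h1 : (-r).sign = -1 := Int.sign_eq_neg_one_iff_neg.mpr (by linarith)
  have h2 : b.sign = 1 := Int.sign_eq_one_iff_pos.mpr hb
  have h5 : (0:ℤ) ≤ r * b := by positivity
  ext i j
  fin_cases i <;> fin_cases j <;>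
    simp [matMut, h1, h2] <;>
    first
      | positivity
      | (rw [max_eq_left h5] <;> ring)
      | (rw [max_eq_left (by positivity : (0:ℤ) ≤ b * r)]; ring)
      | ring

lemma keystep (r y z : ℤ) (hr : 2 ≤ r) (hy : 2 ≤ y)
    (h : r^2 + y^2 + z^2 - r*y*z ≤ 4) : 2 ≤ z := by
  by_contra hz
  push_neg at hz
  have hz1 : z ≤ 1 := by linarith
  nlinarith [sq_nonneg (2*r - y), mul_nonneg (by linarith : (0:ℤ) ≤ 1 - z)
    (by nlinarith : (0:ℤ) ≤ r*y - z - 1)]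

/-- **Lemma 4.1(2),(3) (Lee–Schiffler).** For the non-acyclic cyclic quiver with `r`
arrows `1 → 2`, `t` arrows `2 → 3` and `s` arrows `3 → 1`, the quiver obtained by `n`
alternating mutations at `1, 2, 1, 2, …` is cyclic with multiplicities given by the
Chebyshev-like sequence `c`; in particular `c (n+1) * s - c n * t ≥ 2` for `n ≥ 1`. -/
theorem alternating_mutation_quiver (r s t : ℕ)
    (hr : 2 ≤ r) (hs : 2 ≤ s) (ht : 2 ≤ t)
    (hMarkov : (r : ℤ) ^ 2 + (s : ℤ) ^ 2 + (t : ℤ) ^ 2 - (r : ℤ) * s * t ≤ 4)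
    (c : ℤ → ℤ) (hc1 : c 1 = 0) (hc2 : c 2 = 1)
    (hrec : ∀ m : ℤ, c m = (r : ℤ) * c (m - 1) - c (m - 2))
    (B : Matrix (Fin 3) (Fin 3) ℤ)
    (hB : B = !![0, (r : ℤ), -(s : ℤ); -(r : ℤ), 0, (t : ℤ); (s : ℤ), -(t : ℤ), 0]) :
    ∀ n : ℕ, 1 ≤ n →
      (Even n →
        altMut B n 0 1 = (r : ℤ) ∧
        altMut B n 1 2 = c ((n : ℤ) + 1) * s - c (n : ℤ) * t ∧
        altMut B n 2 0 = c ((n : ℤ) + 2) * s - c ((n : ℤ) + 1) * t) ∧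
      (Odd n →
        altMut B n 1 0 = (r : ℤ) ∧
        altMut B n 0 2 = c ((n : ℤ) + 1) * s - c (n : ℤ) * t ∧
        altMut B n 2 1 = c ((n : ℤ) + 2) * s - c ((n : ℤ) + 1) * t) ∧
      2 ≤ c ((n : ℤ) + 1) * s - c (n : ℤ) * t := by
  have hrz : (2:ℤ) ≤ (r:ℤ) := by exact_mod_cast hr
  have hrpos : (0:ℤ) < (r:ℤ) := by linarith
  have hc0 : c 0 = -1 := by
    have h := hrec 2
    norm_num [hc1, hc2] at h
    linarith
  set D : ℕ → ℤ := fun n => c ((n:ℤ)+1) * s - c (n:ℤ) * t with hD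
  have hD0 : D 0 = t := by simp [hD, hc1, hc0]
  have hD1 : D 1 = s := by simp [hD, hc1, hc2]
  have hDrec : ∀ n : ℕ, D (n+2) = (r:ℤ) * D (n+1) - D n := by
    intro n
    have h3 := hrec ((n:ℤ)+3)
    have h2' := hrec ((n:ℤ)+2)
    have e1 : (n:ℤ)+3-1 = (n:ℤ)+2 := by ring
    have e2 : (n:ℤ)+3-2 = (n:ℤ)+1 := by ring
    have e3 : (n:ℤ)+2-1 = (n:ℤ)+1 := by ring
    have e4 : (n:ℤ)+2-2 = (n:ℤ) := by ring
    rw [e1, e2] at h3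
    rw [e3, e4] at h2'
    simp only [hD]
    push_cast
    have e5 : (n:ℤ)+2+1 = (n:ℤ)+3 := by ring
    have e6 : (n:ℤ)+1+1 = (n:ℤ)+2 := by ring
    rw [e5, e6, h3, h2']
    ring
  have key : ∀ n : ℕ,
      (altMut B n = if n % 2 = 0
        then !![0,(r:ℤ),-(D (n+1)); -(r:ℤ),0,D n; D (n+1), -(D n),0]
        else !![0,-(r:ℤ), D n; (r:ℤ), 0, -(D (n+1)); -(D n), D (n+1), 0]) ∧
      2 ≤ D n ∧ 2 ≤ D (n+1) ∧
      (r:ℤ)^2 + (D n)^2 + (D (n+1))^2 - (r:ℤ) * D n * D (n+1) ≤ 4 := by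
    intro n
    induction n with
    | zero =>
      refine ⟨?_, ?_, ?_, ?_⟩
      · simp [altMut, hB, hD0, hD1]
      · rw [hD0]; exact_mod_cast ht
      · rw [hD1]; exact_mod_cast hs
      · rw [hD0, hD1]; nlinarith [hMarkov]
    | succ n ih =>
      obtain ⟨hM, h2a, h2b, hinv⟩ := ih
      have hinv2 : (r:ℤ)^2 + (D (n+1))^2 + (D (n+2))^2
          - (r:ℤ) * D (n+1) * D (n+2) ≤ 4 := by
        rw [hDrec n]; nlinarith [hinv]
      have h2c : 2 ≤ D (n+2) := keystep (r:ℤ) (D (n+1)) (D (n+2)) hrz h2b hinv2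
      refine ⟨?_, h2b, h2c, hinv2⟩
      by_cases hn : n % 2 = 0
      · have hn1 : (n+1) % 2 = 1 := by omega
        simp only [altMut, hn, if_pos, hn1]
        rw [hM]
        simp only [hn, if_pos, if_true, reduceIte]
        rw [mutE (r:ℤ) (D n) (D (n+1)) hrpos (by linarith), ← hDrec n]
        norm_num
      · have hn1 : (n+1) % 2 = 0 := by omega
        simp only [altMut, hn, hn1, reduceIte]
        rw [hM]
        simp only [hn, reduceIte]
        rw [mutO (r:ℤ) (D n) (D (n+1)) hrpos (by linarith), ← hDrec n]
  intro n hn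
  obtain ⟨hM, h2a, h2b, hinv⟩ := key n
  have hDn1 : D (n+1) = c ((n:ℤ)+2) * s - c ((n:ℤ)+1) * t := by
    simp only [hD]
    push_cast
    ring_nf
  refine ⟨?_, ?_, h2a⟩
  · intro hev
    have he : n % 2 = 0 := Nat.even_iff.mp hev
    rw [if_pos he] at hM
    rw [hM]
    refine ⟨by simp, by simp [hD], ?_⟩
    · rw [← hDn1]; simp
  · intro hod
    have ho : n % 2 = 1 := Nat.odd_iff.mp hod
    rw [if_neg (by omega)] at hM
    rw [hM]
    refine ⟨by simp, by simp [hD], ?_⟩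
    · rw [← hDn1]; simp
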